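/- Let Λ be an Artin algebra, V any finitely generated Λ-module, and D ⊆ mod Λ an additively closed class with Φ-dim(D) < ∞. Then Φ-dim(D ⊕ add V) < ∞. -/

import Mathlib

open scoped Classical

/-- An abstract model of the category `mod Λ` of finitely generated left modules over
an Artin algebra `Λ`, presented through the Krull–Schmidt theorem: a finitely
generated module is (the isomorphism class of) a finite multiset of indecomposable
modules.  The data records which indecomposables are projective, and the multiset of
indecomposable direct summands of the syzygy of each indecomposable (the kernel of a
projective cover). -/
structure ModData where
  /-- iso classes of indecomposable finitely generated modules -/
  Idec : Type
  /-- which indecomposables are projective -/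
  proj : Idec → Prop
  /-- the syzygy of an indecomposable -/
  syz : Idec → Multiset Idec

namespace ModData

variable (Λ : ModData)

/-- finitely generated `Λ`-modules (multisets of indecomposables) -/
abbrev Mod := Multiset Λ.Idec

/-- the syzygy operator `Ω` (extended additively) -/
def Ω (X : Λ.Mod) : Λ.Mod := X.bind Λ.syz

/-- `X` is a projective module -/
def IsProj (X : Λ.Mod) : Prop := ∀ i ∈ X, Λ.proj i

/-- the projective dimension `pd X ∈ ℕ∞`: the least `m` with `Ω^[m] X` projective
(and `⊤` if there is no such `m`) -/
noncomputable def pd (X : Λ.Mod) : ℕ∞ :=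
  sInf ((fun m : ℕ => (m : ℕ∞)) '' {m : ℕ | Λ.IsProj (Λ.Ω^[m] X)})

/-- the free abelian group `K` on the iso classes of indecomposable non-projective
finitely generated modules -/
abbrev K := FreeAbelianGroup {i : Λ.Idec // ¬ Λ.proj i}

/-- the class `[X]` of an indecomposable in `K` (projectives are sent to `0`) -/
noncomputable def cls (i : Λ.Idec) : Λ.K :=
  if h : Λ.proj i then 0 else FreeAbelianGroup.of ⟨i, h⟩

/-- the class `[X] ∈ K` of a module `X` -/
noncomputable def clsM (X : Λ.Mod) : Λ.K := (X.map Λ.cls).sum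

/-- the endomorphism `L` of `K` with `L [X] = [Ω X]` -/
noncomputable def L : Λ.K →+ Λ.K :=
  FreeAbelianGroup.lift fun i => Λ.clsM (Λ.syz i.1)

/-- `⟨X⟩` : the subgroup of `K` generated by the classes of the indecomposable
non-projective direct summands of `X` -/
def gen (X : Λ.Mod) : AddSubgroup Λ.K :=
  AddSubgroup.closure (Λ.cls '' {i | i ∈ X})

/-- the rank of a subgroup of `K` -/
noncomputable def rk (H : AddSubgroup Λ.K) : Cardinal :=
  Module.rank ℤ (AddSubgroup.toIntSubmodule H)

/-- the iterated image `L^k H` of a subgroup of `K` -/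
noncomputable def Lpow (k : ℕ) (H : AddSubgroup Λ.K) : AddSubgroup Λ.K :=
  (fun H' => AddSubgroup.map Λ.L H')^[k] H

/-- the (first) Igusa–Todorov function
`Φ(X) = min {n | rk L^k⟨X⟩ = rk L^(k+1)⟨X⟩ for all k ≥ n}` -/
noncomputable def Phi (X : Λ.Mod) : ℕ :=
  sInf {n : ℕ | ∀ k, n ≤ k →
    Λ.rk (Λ.Lpow k (Λ.gen X)) = Λ.rk (Λ.Lpow (k + 1) (Λ.gen X))}

/-- `add C` : the closure of a class of modules under finite direct sums and
direct summands -/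
def addCl (C : Set Λ.Mod) : Set Λ.Mod :=
  {X | ∃ Y ∈ AddSubmonoid.closure C, X ≤ Y}

/-- `C ⊕ D` : the class of direct sums of a module of `C` and a module of `D` -/
def oplus (C D : Set Λ.Mod) : Set Λ.Mod :=
  {X | ∃ Y ∈ C, ∃ Z ∈ D, X = Y + Z}

/-- the finitistic dimension of a class:
`fin.dim C = sup {pd X | X ∈ C, pd X < ∞}` -/
noncomputable def findim (C : Set Λ.Mod) : ℕ∞ :=
  sSup (Λ.pd '' {X | X ∈ C ∧ Λ.pd X ≠ ⊤})

/-- the (second) Igusa–Todorov function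
`Ψ(X) = Φ(X) + fin.dim (add Ω^(Φ X) X)` -/
noncomputable def Psi (X : Λ.Mod) : ℕ∞ :=
  (Λ.Phi X : ℕ∞) + Λ.findim (Λ.addCl {Λ.Ω^[Λ.Phi X] X})

/-- the `Φ`-dimension of a class -/
noncomputable def PhiDim (C : Set Λ.Mod) : ℕ∞ := ⨆ X ∈ C, (Λ.Phi X : ℕ∞)

/-- the `Ψ`-dimension of a class -/
noncomputable def PsiDim (C : Set Λ.Mod) : ℕ∞ := ⨆ X ∈ C, Λ.Psi X

/-- `C` is an `(n,t,V,D)`-GLIT class, relative to the relation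
`ses X₁ X₀ Z` ↔ "there is a short exact sequence `0 → X₁ → X₀ → Z → 0`":
`D` is additively closed, `t`-syzygy invariant with `Φ`-dim`(D) < ∞`, and every
`C ∈ 𝒞` admits a s.e.s. `0 → V₁ ⊕ D₁ → V₀ ⊕ D₀ → Ω^n C → 0` with `Vᵢ ∈ add V`,
`Dᵢ ∈ D`. -/
def IsGLIT (ses : Λ.Mod → Λ.Mod → Λ.Mod → Prop) (C : Set Λ.Mod)
    (n t : ℕ) (V : Λ.Mod) (D : Set Λ.Mod) : Prop :=
  1 ≤ t ∧ Λ.addCl D = D ∧ (∀ X ∈ D, Λ.Ω^[t] X ∈ D) ∧ Λ.PhiDim D ≠ ⊤ ∧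
    ∀ X ∈ C, ∃ V₁ ∈ Λ.addCl {V}, ∃ V₀ ∈ Λ.addCl {V}, ∃ D₁ ∈ D, ∃ D₀ ∈ D,
      ses (V₁ + D₁) (V₀ + D₀) (Λ.Ω^[n] X)

/-- the subgroup of `K` generated by the classes of the summands of modules of `D` -/
noncomputable def relSub (D : Set Λ.Mod) : AddSubgroup Λ.K :=
  AddSubgroup.closure (Λ.cls '' {i | ∃ X ∈ D, i ∈ X})

/-- the rank of (the image of) a subgroup of `K` in the quotient of `K` by the
classes of modules of `D` -/
noncomputable def rkRel (D : Set Λ.Mod) (H : AddSubgroup Λ.K) : Cardinal :=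
  Module.rank ℤ
    ((AddSubgroup.toIntSubmodule H).map (AddSubgroup.toIntSubmodule (Λ.relSub D)).mkQ)

/-- the generalized Igusa–Todorov function `Φ_{[D]}` relative to a class `D`:
defined as `Φ`, but with ranks computed in the quotient of `K` by the subgroup
generated by the classes of modules in `D` (and of projectives) -/
noncomputable def PhiRel (D : Set Λ.Mod) (X : Λ.Mod) : ℕ :=
  sInf {n : ℕ | ∀ k, n ≤ k →
    Λ.rkRel D (Λ.Lpow k (Λ.gen X)) = Λ.rkRel D (Λ.Lpow (k + 1) (Λ.gen X))}

end ModData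

section Aux

open Cardinal

namespace ModData

variable {Λ : ModData}

noncomputable instance : Module.Free ℤ Λ.K :=
  Module.Free.of_basis (FreeAbelianGroup.basis _)

/-- the linear-map version of `L` -/
noncomputable def LL (Λ : ModData) : Λ.K →ₗ[ℤ] Λ.K := Λ.L.toIntLinearMap

/-- the submodule version of an additive subgroup of `K` -/
noncomputable def sm (H : AddSubgroup Λ.K) : Submodule ℤ Λ.K :=
  AddSubgroup.toIntSubmodule H

lemma sm_map (H : AddSubgroup Λ.K) :
    sm (AddSubgroup.map Λ.L H) = Submodule.map Λ.LL (sm H) := rfl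

lemma rk_def (H : AddSubgroup Λ.K) : Λ.rk H = Module.rank ℤ (sm H) := rfl

lemma sm_le {H H' : AddSubgroup Λ.K} (h : H ≤ H') : sm H ≤ sm H' :=
  AddSubgroup.toIntSubmodule.le_iff_le.mpr h

lemma sm_sup (H H' : AddSubgroup Λ.K) : sm (H ⊔ H') = sm H ⊔ sm H' :=
  AddSubgroup.toIntSubmodule.map_sup H H'

lemma Lpow_succ (k : ℕ) (H : AddSubgroup Λ.K) :
    Λ.Lpow (k + 1) H = AddSubgroup.map Λ.L (Λ.Lpow k H) :=
  Function.iterate_succ_apply' _ _ _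

lemma Lpow_mono (k : ℕ) {H H' : AddSubgroup Λ.K} (h : H ≤ H') :
    Λ.Lpow k H ≤ Λ.Lpow k H' := by
  induction k with
  | zero => exact h
  | succ n ih => rw [Lpow_succ, Lpow_succ]; exact AddSubgroup.map_mono ih

lemma Lpow_sup (k : ℕ) (H H' : AddSubgroup Λ.K) :
    Λ.Lpow k (H ⊔ H') = Λ.Lpow k H ⊔ Λ.Lpow k H' := by
  induction k with
  | zero => rfl
  | succ n ih => rw [Lpow_succ, ih, AddSubgroup.map_sup, Lpow_succ, Lpow_succ]

lemma sm_gen_eq (X : Λ.Mod) :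
    sm (Λ.gen X) = Submodule.span ℤ (Λ.cls '' {i | i ∈ X}) := by
  have h := Submodule.span_int_eq_addSubgroupClosure (M := Λ.K) (Λ.cls '' {i | i ∈ X})
  show AddSubgroup.toIntSubmodule (AddSubgroup.closure _) = _
  rw [← h, Submodule.toAddSubgroup_toIntSubmodule]

lemma gen_fg (X : Λ.Mod) : (sm (Λ.gen X)).FG := by
  rw [sm_gen_eq]
  exact Submodule.fg_span ((X.finite_toSet).image _)

lemma Lpow_fg {H : AddSubgroup Λ.K} (h : (sm H).FG) (k : ℕ) :
    (sm (Λ.Lpow k H)).FG := by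
  induction k with
  | zero => exact h
  | succ n ih => rw [Lpow_succ, sm_map]; exact ih.map _

lemma rk_lt_aleph0 {H : AddSubgroup Λ.K} (h : (sm H).FG) : Λ.rk H < ℵ₀ := by
  haveI : Module.Finite ℤ (AddSubgroup.toIntSubmodule H) := Module.Finite.iff_fg.mpr h
  exact Module.rank_lt_aleph0 ℤ _

lemma rk_mono {H H' : AddSubgroup Λ.K} (h : H ≤ H') : Λ.rk H ≤ Λ.rk H' :=
  Submodule.rank_mono (sm_le h)

lemma rk_map_le (H : AddSubgroup Λ.K) :
    Λ.rk (AddSubgroup.map Λ.L H) ≤ Λ.rk H := by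
  rw [rk_def, rk_def, sm_map]
  set f0 : (sm H) →ₗ[ℤ] Λ.K := Λ.LL.comp (sm H).subtype with hf0
  have hrange : LinearMap.range f0 = Submodule.map Λ.LL (sm H) := by
    rw [hf0, LinearMap.range_comp, Submodule.range_subtype]
  have hrn := LinearMap.rank_range_add_rank_ker f0
  rw [hrange] at hrn
  rw [← hrn]
  exact self_le_add_right _ _

lemma L_inj_on_Lpow {H : AddSubgroup Λ.K} (hfg : (sm H).FG) {k : ℕ}
    (heq : Λ.rk (Λ.Lpow (k + 1) H) = Λ.rk (Λ.Lpow k H)) :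
    ∀ x ∈ Λ.Lpow k H, Λ.L x = 0 → x = 0 := by
  set p := sm (Λ.Lpow k H) with hp
  have hpfg : p.FG := Lpow_fg hfg k
  set f0 : p →ₗ[ℤ] Λ.K := Λ.LL.comp p.subtype with hf0
  have hrange : LinearMap.range f0 = Submodule.map Λ.LL p := by
    rw [hf0, LinearMap.range_comp, Submodule.range_subtype]
  have hrn := LinearMap.rank_range_add_rank_ker f0
  have h1 : Module.rank ℤ (LinearMap.range f0) = Λ.rk (Λ.Lpow (k + 1) H) := by
    rw [hrange, rk_def, Lpow_succ, sm_map]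
  have hplt : Module.rank ℤ p < ℵ₀ := by
    have : Module.Finite ℤ p := Module.Finite.iff_fg.mpr hpfg
    exact Module.rank_lt_aleph0 ℤ _
  have hker : Module.rank ℤ (LinearMap.ker f0) = 0 := by
    rw [h1, heq] at hrn
    rw [show Module.rank ℤ p = Λ.rk (Λ.Lpow k H) from rfl] at hrn
    have hk1 : Module.rank ℤ (LinearMap.ker f0) < ℵ₀ :=
      lt_of_le_of_lt (le_trans (self_le_add_left _ _) (le_of_eq hrn)) hplt
    have hrk : Λ.rk (Λ.Lpow k H) < ℵ₀ := rk_lt_aleph0 hpfg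
    have hn := congrArg Cardinal.toNat hrn
    rw [Cardinal.toNat_add hrk hk1] at hn
    have : Cardinal.toNat (Module.rank ℤ (LinearMap.ker f0)) = 0 := by omega
    rw [← Cardinal.cast_toNat_of_lt_aleph0 hk1, this, Nat.cast_zero]
  have hsub : Subsingleton (LinearMap.ker f0) := by rwa [rank_zero_iff] at hker
  intro x hx hLx
  have hmem : (⟨x, hx⟩ : p) ∈ LinearMap.ker f0 := by
    simp only [LinearMap.mem_ker, hf0, LinearMap.comp_apply, Submodule.subtype_apply]
    exact hLx
  have := hsub.elim (⟨⟨x, hx⟩, hmem⟩ : LinearMap.ker f0) 0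
  have : (⟨x, hx⟩ : p) = 0 := congrArg Subtype.val this
  exact congrArg Subtype.val this

lemma rk_Lpow_eq_of_le {H G : AddSubgroup Λ.K} (hHG : H ≤ G) {k : ℕ}
    (hinj : ∀ x ∈ Λ.Lpow k G, Λ.L x = 0 → x = 0) :
    Λ.rk (Λ.Lpow (k + 1) H) = Λ.rk (Λ.Lpow k H) := by
  set p := sm (Λ.Lpow k H) with hp
  set f0 : p →ₗ[ℤ] Λ.K := Λ.LL.comp p.subtype with hf0
  have hrange : LinearMap.range f0 = Submodule.map Λ.LL p := by
    rw [hf0, LinearMap.range_comp, Submodule.range_subtype]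
  have hinj0 : Function.Injective f0 := by
    rw [← LinearMap.ker_eq_bot]
    ext y
    simp only [LinearMap.mem_ker, Submodule.mem_bot, hf0, LinearMap.comp_apply,
      Submodule.subtype_apply]
    constructor
    · intro hy
      have hy' : (y : Λ.K) = 0 := hinj _ (Lpow_mono k hHG y.2) hy
      exact Subtype.ext hy'
    · intro hy; rw [hy]; simp
  have h1 : Module.rank ℤ (LinearMap.range f0) = Module.rank ℤ p :=
    rank_range_of_injective f0 hinj0
  rw [rk_def, rk_def, Lpow_succ, sm_map, ← hp, ← hrange, h1]

lemma phiSet_nonempty (X : Λ.Mod) :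
    {n : ℕ | ∀ k, n ≤ k →
      Λ.rk (Λ.Lpow k (Λ.gen X)) = Λ.rk (Λ.Lpow (k + 1) (Λ.gen X))}.Nonempty := by
  set g : ℕ → ℕ := fun k => (Λ.rk (Λ.Lpow k (Λ.gen X))).toNat with hg
  have hfin : ∀ k, Λ.rk (Λ.Lpow k (Λ.gen X)) < ℵ₀ :=
    fun k => rk_lt_aleph0 (Lpow_fg (gen_fg X) k)
  have hdec : ∀ k, g (k + 1) ≤ g k := by
    intro k
    exact Cardinal.toNat_le_toNat (by rw [Lpow_succ]; exact rk_map_le _) (hfin k)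
  have hmem : sInf (Set.range g) ∈ Set.range g :=
    Nat.sInf_mem (Set.range_nonempty g)
  obtain ⟨N, hN⟩ := hmem
  refine ⟨N, fun k hk => ?_⟩
  have hup : ∀ j, N ≤ j → g j = g N := by
    intro j hj
    induction j, hj using Nat.le_induction with
    | base => rfl
    | succ j hj ih =>
      have h1 : g (j + 1) ≤ g N := le_trans (hdec j) (le_of_eq ih)
      have h2 : g N ≤ g (j + 1) :=
        le_trans (le_of_eq hN) (Nat.sInf_le ⟨j + 1, rfl⟩)
      omega
  have h3 : g k = g (k + 1) := by
    rw [hup k hk, hup (k + 1) (le_trans hk (Nat.le_succ k))]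
  exact Cardinal.toNat_injOn (hfin k) (hfin (k + 1)) h3

lemma phi_spec (X : Λ.Mod) :
    ∀ k, Λ.Phi X ≤ k →
      Λ.rk (Λ.Lpow k (Λ.gen X)) = Λ.rk (Λ.Lpow (k + 1) (Λ.gen X)) :=
  Nat.sInf_mem (phiSet_nonempty X)

lemma phi_le {X : Λ.Mod} {n : ℕ}
    (h : ∀ k, n ≤ k →
      Λ.rk (Λ.Lpow k (Λ.gen X)) = Λ.rk (Λ.Lpow (k + 1) (Λ.gen X))) :
    Λ.Phi X ≤ n :=
  Nat.sInf_le h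

lemma rk_stable {X : Λ.Mod} {n : ℕ} (hn : Λ.Phi X ≤ n) :
    ∀ k, n ≤ k → Λ.rk (Λ.Lpow k (Λ.gen X)) = Λ.rk (Λ.Lpow n (Λ.gen X)) := by
  intro k hk
  induction k, hk using Nat.le_induction with
  | base => rfl
  | succ j hj ih =>
    rw [← ih]
    exact (phi_spec X j (le_trans hn hj)).symm

lemma gen_add (X Y : Λ.Mod) : Λ.gen (X + Y) = Λ.gen X ⊔ Λ.gen Y := by
  show AddSubgroup.closure _ = AddSubgroup.closure _ ⊔ AddSubgroup.closure _
  rw [← AddSubgroup.closure_union, ← Set.image_union]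
  congr 2
  ext i
  simp [Multiset.mem_add]

lemma gen_le_of_subset {X Y : Λ.Mod} (h : ∀ i ∈ X, i ∈ Y) : Λ.gen X ≤ Λ.gen Y :=
  AddSubgroup.closure_mono (Set.image_mono h)

lemma gen_addCl_le {Z V : Λ.Mod} (h : Z ∈ Λ.addCl {V}) : Λ.gen Z ≤ Λ.gen V := by
  obtain ⟨W, hW, hZW⟩ := h
  rw [AddSubmonoid.mem_closure_singleton] at hW
  obtain ⟨n, rfl⟩ := hW
  refine gen_le_of_subset fun i hi => ?_
  exact (Multiset.mem_nsmul.mp (Multiset.mem_of_le hZW hi)).2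

lemma rk_toNat_submodular {A A' B : AddSubgroup Λ.K} (hAA' : A ≤ A')
    (hA' : Λ.rk A' < ℵ₀) (hB : Λ.rk B < ℵ₀) :
    (Λ.rk (A' ⊔ B)).toNat + (Λ.rk A).toNat ≤
      (Λ.rk (A ⊔ B)).toNat + (Λ.rk A').toNat := by
  have e1 := Submodule.rank_sup_add_rank_inf_eq (sm A') (sm B)
  have e2 := Submodule.rank_sup_add_rank_inf_eq (sm A) (sm B)
  have e3 : Module.rank ℤ (sm A ⊓ sm B : Submodule ℤ Λ.K) ≤
      Module.rank ℤ (sm A' ⊓ sm B : Submodule ℤ Λ.K) :=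
    Submodule.rank_mono (inf_le_inf_right _ (sm_le hAA'))
  have hA : Λ.rk A < ℵ₀ := lt_of_le_of_lt (rk_mono hAA') hA'
  have hi1 : Module.rank ℤ (sm A' ⊓ sm B : Submodule ℤ Λ.K) < ℵ₀ :=
    lt_of_le_of_lt (Submodule.rank_mono inf_le_right) hB
  have hi2 : Module.rank ℤ (sm A ⊓ sm B : Submodule ℤ Λ.K) < ℵ₀ :=
    lt_of_le_of_lt (Submodule.rank_mono inf_le_right) hB
  have hs1 : Λ.rk (A' ⊔ B) < ℵ₀ := by
    rw [rk_def, sm_sup]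
    exact lt_of_le_of_lt (Submodule.rank_add_le_rank_add_rank _ _)
      (Cardinal.add_lt_aleph0 hA' hB)
  have hs2 : Λ.rk (A ⊔ B) < ℵ₀ := by
    rw [rk_def, sm_sup]
    exact lt_of_le_of_lt (Submodule.rank_add_le_rank_add_rank _ _)
      (Cardinal.add_lt_aleph0 hA hB)
  have r1 : Module.rank ℤ (sm A' ⊔ sm B : Submodule ℤ Λ.K) = Λ.rk (A' ⊔ B) := by
    rw [rk_def, sm_sup]
  have r2 : Module.rank ℤ (sm A ⊔ sm B : Submodule ℤ Λ.K) = Λ.rk (A ⊔ B) := by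
    rw [rk_def, sm_sup]
  rw [r1, ← rk_def A', ← rk_def B] at e1
  rw [r2, ← rk_def A, ← rk_def B] at e2
  obtain ⟨n1, hn1⟩ := Cardinal.lt_aleph0.mp hs1
  obtain ⟨n2, hn2⟩ := Cardinal.lt_aleph0.mp hs2
  obtain ⟨nA, hnA⟩ := Cardinal.lt_aleph0.mp hA
  obtain ⟨nA', hnA'⟩ := Cardinal.lt_aleph0.mp hA'
  obtain ⟨nB, hnB⟩ := Cardinal.lt_aleph0.mp hB
  obtain ⟨ni1, hni1⟩ := Cardinal.lt_aleph0.mp hi1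
  obtain ⟨ni2, hni2⟩ := Cardinal.lt_aleph0.mp hi2
  rw [hn1, hnA, hn2, hnA']
  rw [hn1, hni1, hnA', hnB] at e1
  rw [hn2, hni2, hnA, hnB] at e2
  rw [hni1, hni2] at e3
  have e1' : n1 + ni1 = nA' + nB := by exact_mod_cast e1
  have e2' : n2 + ni2 = nA + nB := by exact_mod_cast e2
  have e3' : ni2 ≤ ni1 := by exact_mod_cast e3
  simp only [Cardinal.toNat_natCast]
  omega

end ModData

end Aux

/-- for any module `V` and an additively closed class `D` with
`Φ-dim D < ∞`, one has `Φ-dim (D ⊕ add V) < ∞`. -/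
theorem PhiDim_oplus_finite (Λ : ModData) (V : Λ.Mod)
    (D : Set Λ.Mod) (haddD : Λ.addCl D = D) (hD : Λ.PhiDim D ≠ ⊤) :
    Λ.PhiDim (Λ.oplus D (Λ.addCl {V})) ≠ ⊤ := by
  classical
  have h0D : (0 : Λ.Mod) ∈ D := by
    rw [← haddD]
    exact ⟨0, AddSubmonoid.zero_mem _, le_rfl⟩
  have haddmem : ∀ Y ∈ D, ∀ Y' ∈ D, Y + Y' ∈ D := by
    intro Y hY Y' hY'
    rw [← haddD]
    exact ⟨Y + Y', AddSubmonoid.add_mem _ (AddSubmonoid.subset_closure hY)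
      (AddSubmonoid.subset_closure hY'), le_rfl⟩
  set dbnd := (Λ.PhiDim D).toNat with hdbnd
  have hdb : ∀ Y ∈ D, Λ.Phi Y ≤ dbnd := by
    intro Y hY
    have h1 : ((Λ.Phi Y : ℕ∞)) ≤ Λ.PhiDim D :=
      le_iSup₂ (f := fun X (_ : X ∈ D) => ((Λ.Phi X : ℕ∞))) Y hY
    rw [← ENat.coe_toNat hD] at h1
    exact_mod_cast h1
  set m := max dbnd (Λ.Phi V) with hm
  have hstabY : ∀ Y ∈ D, ∀ k, m ≤ k →
      Λ.rk (Λ.Lpow k (Λ.gen Y)) = Λ.rk (Λ.Lpow m (Λ.gen Y)) :=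
    fun Y hY => ModData.rk_stable (le_trans (hdb Y hY) (le_max_left _ _))
  have hstabV : ∀ k, m ≤ k →
      Λ.rk (Λ.Lpow k (Λ.gen V)) = Λ.rk (Λ.Lpow m (Λ.gen V)) :=
    ModData.rk_stable (le_max_right _ _)
  have hfinY : ∀ (Y : Λ.Mod) (k : ℕ), Λ.rk (Λ.Lpow k (Λ.gen Y)) < Cardinal.aleph0 :=
    fun Y k => ModData.rk_lt_aleph0 (ModData.Lpow_fg (ModData.gen_fg Y) k)
  have hfgsup : ∀ Y : Λ.Mod, (ModData.sm (Λ.gen Y ⊔ Λ.gen V)).FG := by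
    intro Y
    rw [ModData.sm_sup]
    exact Submodule.FG.sup (ModData.gen_fg Y) (ModData.gen_fg V)
  have hfinsup : ∀ (Y : Λ.Mod) (k : ℕ),
      Λ.rk (Λ.Lpow k (Λ.gen Y ⊔ Λ.gen V)) < Cardinal.aleph0 :=
    fun Y k => ModData.rk_lt_aleph0 (ModData.Lpow_fg (hfgsup Y) k)
  set nr : AddSubgroup Λ.K → ℕ := fun H => (Λ.rk H).toNat with hnr
  set a : Λ.Mod → ℕ := fun Y => nr (Λ.Lpow m (Λ.gen Y)) with ha
  set β : ℕ := nr (Λ.Lpow m (Λ.gen V)) with hβ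
  set r : Λ.Mod → ℕ → ℕ := fun Y k => nr (Λ.Lpow k (Λ.gen Y ⊔ Λ.gen V)) with hr
  have hak : ∀ Y ∈ D, ∀ k, m ≤ k → nr (Λ.Lpow k (Λ.gen Y)) = a Y := by
    intro Y hY k hk
    simp only [hnr, ha]
    exact congrArg Cardinal.toNat (hstabY Y hY k hk)
  have hbk : ∀ k, m ≤ k → nr (Λ.Lpow k (Λ.gen V)) = β := by
    intro k hk
    simp only [hnr, hβ]
    exact congrArg Cardinal.toNat (hstabV k hk)
  have hrdec : ∀ (Y : Λ.Mod) (k : ℕ), r Y (k + 1) ≤ r Y k := by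
    intro Y k
    simp only [hr, hnr]
    exact Cardinal.toNat_le_toNat
      (by rw [ModData.Lpow_succ]; exact ModData.rk_map_le _) (hfinsup Y k)
  have hrge : ∀ Y ∈ D, ∀ k, m ≤ k → a Y ≤ r Y k := by
    intro Y hY k hk
    rw [← hak Y hY k hk]
    simp only [hr, hnr]
    exact Cardinal.toNat_le_toNat
      (ModData.rk_mono (ModData.Lpow_mono k le_sup_left)) (hfinsup Y k)
  have hrle : ∀ Y ∈ D, ∀ k, m ≤ k → r Y k ≤ a Y + β := by
    intro Y hY k hk
    have h1 : Λ.rk (Λ.Lpow k (Λ.gen Y ⊔ Λ.gen V)) ≤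
        Λ.rk (Λ.Lpow k (Λ.gen Y)) + Λ.rk (Λ.Lpow k (Λ.gen V)) := by
      rw [ModData.Lpow_sup, ModData.rk_def, ModData.sm_sup]
      exact Submodule.rank_add_le_rank_add_rank _ _
    have h2 := Cardinal.toNat_le_toNat h1 (Cardinal.add_lt_aleph0 (hfinY Y k) (hfinY V k))
    rw [Cardinal.toNat_add (hfinY Y k) (hfinY V k)] at h2
    calc r Y k ≤ nr (Λ.Lpow k (Λ.gen Y)) + nr (Λ.Lpow k (Λ.gen V)) := h2
    _ = a Y + β := by rw [hak Y hY k hk, hbk k hk]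
  have hsubm : ∀ Y Y' : Λ.Mod, Λ.gen Y ≤ Λ.gen Y' → ∀ k : ℕ,
      r Y' k + nr (Λ.Lpow k (Λ.gen Y)) ≤ r Y k + nr (Λ.Lpow k (Λ.gen Y')) := by
    intro Y Y' hYY' k
    have h0 := ModData.rk_toNat_submodular (Λ := Λ) (A := Λ.Lpow k (Λ.gen Y))
      (A' := Λ.Lpow k (Λ.gen Y')) (B := Λ.Lpow k (Λ.gen V))
      (ModData.Lpow_mono k hYY') (hfinY Y' k) (hfinY V k)
    rw [← ModData.Lpow_sup, ← ModData.Lpow_sup] at h0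
    simpa only [hr, hnr] using h0
  set v : Λ.Mod → ℕ → ℕ := fun Y k => a Y + β - r Y k with hv
  set S : Set ℕ := {n | ∃ Y, Y ∈ D ∧ ∃ k, m ≤ k ∧ v Y k = n} with hS
  have hSne : S.Nonempty := ⟨v 0 m, 0, h0D, m, le_rfl, rfl⟩
  have hSbdd : BddAbove S := by
    refine ⟨β, fun n hn => ?_⟩
    obtain ⟨Y, hY, k, hk, rfl⟩ := hn
    have h1 := hrge Y hY k hk
    simp only [hv]
    omega
  obtain ⟨Y₀, hY₀, k₀, hk₀m, hv₀⟩ := Nat.sSup_mem hSne hSbdd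
  have key : ∀ X ∈ Λ.oplus D (Λ.addCl {V}), Λ.Phi X ≤ k₀ := by
    rintro X ⟨Y, hY, Z, hZ, rfl⟩
    set Y'' : Λ.Mod := Y + Y₀ with hY''def
    have hY''D : Y'' ∈ D := haddmem Y hY Y₀ hY₀
    have hgenY : Λ.gen Y ≤ Λ.gen Y'' := by
      rw [hY''def, ModData.gen_add]; exact le_sup_left
    have hgenY₀ : Λ.gen Y₀ ≤ Λ.gen Y'' := by
      rw [hY''def, ModData.gen_add]; exact le_sup_right
    have hvY'' : ∀ k, k₀ ≤ k → v Y'' k = sSup S := by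
      intro k hk
      have hmk : m ≤ k := le_trans hk₀m hk
      have hle : v Y'' k ≤ sSup S := le_csSup hSbdd ⟨Y'', hY''D, k, hmk, rfl⟩
      have hmono : ∀ j, k₀ ≤ j → v Y'' k₀ ≤ v Y'' j := by
        intro j hj
        induction j, hj using Nat.le_induction with
        | base => exact le_rfl
        | succ j hj ih =>
          have h1 := hrdec Y'' j
          simp only [hv] at ih ⊢
          omega
      have hY₀le : v Y₀ k₀ ≤ v Y'' k₀ := by
        have h1 := hsubm Y₀ Y'' hgenY₀ k₀
        rw [hak Y₀ hY₀ k₀ hk₀m, hak Y'' hY''D k₀ hk₀m] at h1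
        have h2 := hrle Y₀ hY₀ k₀ hk₀m
        have h3 := hrge Y'' hY''D k₀ hk₀m
        simp only [hv]
        omega
      have hge : sSup S ≤ v Y'' k :=
        le_trans (le_of_eq hv₀.symm) (le_trans hY₀le (hmono k hk))
      omega
    have hstab : ∀ k, k₀ ≤ k →
        Λ.rk (Λ.Lpow (k + 1) (Λ.gen Y'' ⊔ Λ.gen V)) =
          Λ.rk (Λ.Lpow k (Λ.gen Y'' ⊔ Λ.gen V)) := by
      intro k hk
      have h1 := hvY'' k hk
      have h2 := hvY'' (k + 1) (le_trans hk (Nat.le_succ k))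
      have h3 := hrdec Y'' k
      have h4 := hrle Y'' hY''D k (le_trans hk₀m hk)
      have h5 := hrge Y'' hY''D (k + 1) (le_trans hk₀m (le_trans hk (Nat.le_succ k)))
      have h6 : r Y'' (k + 1) = r Y'' k := by
        simp only [hv] at h1 h2
        omega
      have h7 : (Λ.rk (Λ.Lpow (k + 1) (Λ.gen Y'' ⊔ Λ.gen V))).toNat =
          (Λ.rk (Λ.Lpow k (Λ.gen Y'' ⊔ Λ.gen V))).toNat := by
        simpa only [hr, hnr] using h6
      exact Cardinal.toNat_injOn (hfinsup Y'' (k + 1)) (hfinsup Y'' k) h7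
    have hinj : ∀ k, k₀ ≤ k → ∀ x ∈ Λ.Lpow k (Λ.gen Y'' ⊔ Λ.gen V), Λ.L x = 0 → x = 0 :=
      fun k hk => ModData.L_inj_on_Lpow (hfgsup Y'') (hstab k hk)
    have hgenle : Λ.gen (Y + Z) ≤ Λ.gen Y'' ⊔ Λ.gen V := by
      rw [ModData.gen_add]
      exact sup_le (le_trans hgenY le_sup_left)
        (le_trans (ModData.gen_addCl_le hZ) le_sup_right)
    refine ModData.phi_le fun k hk => ?_
    exact (ModData.rk_Lpow_eq_of_le hgenle (hinj k hk)).symm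
  have hfinal : Λ.PhiDim (Λ.oplus D (Λ.addCl {V})) ≤ (k₀ : ℕ∞) :=
    iSup₂_le fun X hX => by exact_mod_cast Nat.cast_le.mpr (key X hX)
  exact ne_top_of_le_ne_top (by simp) hfinal
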